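/- Let A be a Boolean algebra with Stone space K_A, and let K be any compact Hausdorff space. Then irr(A) ≤ irr_{BaA}(C(K_A)) ≤ irr_{BaS}(C(K_A)), and irr_{BaA}(C(K)) ≤ irr_{BaS}(C(K)). -/

import Mathlib

open Cardinal Set Topology

universe u

noncomputable section

/-- The spread of a topological space: the supremum of cardinalities of discrete subspaces. -/
def spread (Z : Type u) [TopologicalSpace Z] : Cardinal.{u} :=
  ⨆ D : {D : Set Z // DiscreteTopology D}, #D.1

/-- The density of a topological space: the least cardinality of a dense subset. -/
def densityCard (Z : Type u) [TopologicalSpace Z] : Cardinal.{u} :=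
  ⨅ D : {D : Set Z // Dense D}, #D.1

/-- The hereditary density: the supremum of the densities of all subspaces. -/
def hdens (Z : Type u) [TopologicalSpace Z] : Cardinal.{u} :=
  ⨆ S : Set Z, densityCard S

/-- The Lindelöf degree: the least cardinal κ such that every open cover
has a subcover of cardinality at most κ. -/
def lindelofDeg (Z : Type u) [TopologicalSpace Z] : Cardinal.{u} :=
  sInf {κ | ∀ (ι : Type u) (U : ι → Set Z), (∀ i, IsOpen (U i)) → (⋃ i, U i) = Set.univ →
    ∃ t : Set ι, #t ≤ κ ∧ (⋃ i ∈ t, U i) = Set.univ}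

/-- The hereditary Lindelöf degree: the supremum of the Lindelöf degrees of all subspaces. -/
def hLindelof (Z : Type u) [TopologicalSpace Z] : Cardinal.{u} :=
  ⨆ S : Set Z, lindelofDeg S

/-- Irredundance with respect to closed linear subspaces: the supremum of cardinalities of
sets `F` such that no `x ∈ F` lies in the closed linear span of `F \\ {x}`. -/
def irrBaS (X : Type u) [AddCommGroup X] [Module ℝ X] [TopologicalSpace X] : Cardinal.{u} :=
  sSup {c | ∃ F : Set X,
    (∀ x ∈ F, x ∉ closure ((Submodule.span ℝ (F \ {x}) : Submodule ℝ X) : Set X)) ∧ c = #F}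

/-- Irredundance of `C(K, ℝ)` with respect to closed subalgebras (containing the constants):
the supremum of cardinalities of sets `F` such that no `f ∈ F` lies in the closed subalgebra
generated by `F \\ {f}`. -/
def irrBaA (K : Type u) [TopologicalSpace K] : Cardinal.{u} :=
  sSup {c | ∃ F : Set C(K, ℝ),
    (∀ f ∈ F, f ∉ closure
      ((Algebra.adjoin ℝ (F \ {f}) : Subalgebra ℝ C(K, ℝ)) : Set C(K, ℝ))) ∧ c = #F}

/-- The underlying set of the Boolean subalgebra generated by a subset of a Boolean algebra. -/
def boolGen {A : Type u} [BooleanAlgebra A] (s : Set A) : Set A :=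
  ⋂₀ {t : Set A | s ⊆ t ∧ (⊥ : A) ∈ t ∧ (⊤ : A) ∈ t ∧ (∀ x ∈ t, xᶜ ∈ t) ∧
      (∀ x ∈ t, ∀ y ∈ t, x ⊔ y ∈ t) ∧ (∀ x ∈ t, ∀ y ∈ t, x ⊓ y ∈ t)}

/-- The irredundance of a Boolean algebra: the supremum of cardinalities of sets `R` such
that no `r ∈ R` belongs to the subalgebra generated by `R \\ {r}`. -/
def irrBool (A : Type u) [BooleanAlgebra A] : Cardinal.{u} :=
  sSup {c | ∃ R : Set A, (∀ r ∈ R, r ∉ boolGen (R \ {r})) ∧ c = #R}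

/-- The Stone space of a Boolean algebra `A`: the space of Boolean homomorphisms `A → Bool`
(equivalently, ultrafilters on `A`) with the topology of pointwise convergence, whose
basic (cl)open sets are `[a] = {u | u a = true}`. -/
abbrev StoneSpace (A : Type u) [BooleanAlgebra A] : Type u :=
  {g : A → Bool // g ⊤ = ⊤ ∧ g ⊥ = ⊥ ∧ (∀ a b, g (a ⊔ b) = g a ⊔ g b) ∧
    (∀ a b, g (a ⊓ b) = g a ⊓ g b)}

instance StoneSpace.compactSpace (A : Type u) [BooleanAlgebra A] :
    CompactSpace (StoneSpace A) := by
  have h2 : ∀ (op : Bool → Bool → Bool) (op' : A → A → A),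
      IsClosed {g : A → Bool | ∀ a b, g (op' a b) = op (g a) (g b)} := by
    intro op op'
    have : {g : A → Bool | ∀ a b, g (op' a b) = op (g a) (g b)}
        = ⋂ (a : A), ⋂ (b : A), {g | g (op' a b) = op (g a) (g b)} := by
      ext g; simp [Set.mem_iInter]
    rw [this]
    exact isClosed_iInter fun a => isClosed_iInter fun b =>
      isClosed_eq (continuous_apply _)
        (show Continuous ((fun p : Bool × Bool => op p.1 p.2) ∘ fun g : A → Bool => (g a, g b))
          from continuous_of_discreteTopology.comp
            ((continuous_apply a).prodMk (continuous_apply b)))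
  have h : IsClosed {g : A → Bool | g ⊤ = ⊤ ∧ g ⊥ = ⊥ ∧ (∀ a b, g (a ⊔ b) = g a ⊔ g b) ∧
      (∀ a b, g (a ⊓ b) = g a ⊓ g b)} := by
    apply IsClosed.inter (isClosed_eq (continuous_apply _) continuous_const)
    apply IsClosed.inter (isClosed_eq (continuous_apply _) continuous_const)
    exact (h2 (· ⊔ ·) (· ⊔ ·)).inter (h2 (· ⊓ ·) (· ⊓ ·))
  exact isCompact_iff_compactSpace.mp h.isCompact

namespace BA14

variable {A : Type u} [BooleanAlgebra A]

def IsFilt (U : Set A) : Prop :=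
  ⊥ ∉ U ∧ (∀ x ∈ U, ∀ y, x ≤ y → y ∈ U) ∧ ∀ x ∈ U, ∀ y ∈ U, x ⊓ y ∈ U

lemma IsFilt.gen {P : A → Prop} {r : A} (hne : ∃ x, P x)
    (hmeet : ∀ x y, P x → P y → P (x ⊓ y))
    (hbot : ∀ x, P x → ¬ x ⊓ r ≤ ⊥) : IsFilt {y | ∃ x, P x ∧ x ⊓ r ≤ y} := by
  refine ⟨fun ⟨x, hx, hle⟩ => hbot x hx hle,
    fun x ⟨z, hz, hle⟩ y hxy => ⟨z, hz, hle.trans hxy⟩,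
    fun x ⟨z, hz, hle⟩ y ⟨w, hw, hle'⟩ => ⟨z ⊓ w, hmeet _ _ hz hw, ?_⟩⟩
  calc z ⊓ w ⊓ r ≤ (z ⊓ r) ⊓ (w ⊓ r) := le_inf
        (inf_le_inf_right r inf_le_left) (inf_le_inf_right r inf_le_right)
    _ ≤ x ⊓ y := inf_le_inf hle hle'

lemma IsFilt.top_mem {U : Set A} (h : IsFilt U) (hne : U.Nonempty) : ⊤ ∈ U := by
  obtain ⟨x, hx⟩ := hne; exact h.2.1 x hx ⊤ le_top

lemma exists_ultra {U : Set A} (h : IsFilt U) (hne : U.Nonempty) :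
    ∃ V, U ⊆ V ∧ IsFilt V ∧ (∀ a, a ∈ V ∨ aᶜ ∈ V) := by
  have hchain : ∀ c ⊆ {V : Set A | IsFilt V}, IsChain (· ⊆ ·) c → c.Nonempty →
      ∃ ub ∈ {V : Set A | IsFilt V}, ∀ s ∈ c, s ⊆ ub := by
    intro c hcS hchain hcne
    refine ⟨⋃₀ c, ⟨?_, ?_, ?_⟩, fun s hs => subset_sUnion_of_mem hs⟩
    · rintro ⟨t, htc, hbt⟩
      exact (hcS htc).1 hbt
    · rintro x ⟨t, htc, hxt⟩ y hxy
      exact ⟨t, htc, (hcS htc).2.1 x hxt y hxy⟩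
    · rintro x ⟨t, htc, hxt⟩ y ⟨t', ht'c, hyt'⟩
      rcases hchain.total htc ht'c with hle | hle
      · exact ⟨t', ht'c, (hcS ht'c).2.2 x (hle hxt) y hyt'⟩
      · exact ⟨t, htc, (hcS htc).2.2 x hxt y (hle hyt')⟩
  obtain ⟨M, hUM, hM⟩ := zorn_subset_nonempty {V : Set A | IsFilt V} hchain U h
  refine ⟨M, hUM, hM.1, fun a => ?_⟩
  by_contra hcon
  push_neg at hcon
  obtain ⟨ha, ha'⟩ := hcon
  have hMne : M.Nonempty := ⟨⊤, hUM (h.top_mem hne)⟩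
  by_cases hbot : (⊥ : A) ∈ {y | ∃ m, m ∈ M ∧ m ⊓ a ≤ y}
  · obtain ⟨m, hm, hle⟩ := hbot
    have : m ≤ aᶜ := by
      rw [le_compl_iff_disjoint_right, disjoint_iff]
      exact le_bot_iff.mp hle
    exact ha' (hM.1.2.1 m hm aᶜ this)
  · have hfilt : IsFilt {y | ∃ m, m ∈ M ∧ m ⊓ a ≤ y} :=
      IsFilt.gen hMne (fun x y hx hy => hM.1.2.2 x hx y hy)
        (fun x hx hle => hbot ⟨x, hx, hle⟩)
    have hsub : M ⊆ {y | ∃ m, m ∈ M ∧ m ⊓ a ≤ y} := fun m hm => ⟨m, hm, inf_le_left⟩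
    have hMM : {y | ∃ m, m ∈ M ∧ m ⊓ a ≤ y} ⊆ M := hM.2 hfilt hsub
    exact ha (hMM ⟨⊤, hM.1.2.1 _ hMne.choose_spec ⊤ le_top, inf_le_right⟩)

def toStone (V : Set A) (hV : IsFilt V) (hu : ∀ a, a ∈ V ∨ aᶜ ∈ V)
    (hne : V.Nonempty) : StoneSpace A := by
  classical
  have hnot : ∀ a, a ∈ V → aᶜ ∈ V → False := fun a ha ha' =>
    hV.1 (by simpa using hV.2.2 a ha aᶜ ha')
  have hsup : ∀ a b : A, a ⊔ b ∈ V ↔ a ∈ V ∨ b ∈ V := by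
    intro a b
    constructor
    · intro hab
      by_contra hcon
      push_neg at hcon
      have ha' : aᶜ ∈ V := (hu a).resolve_left hcon.1
      have hb' : bᶜ ∈ V := (hu b).resolve_left hcon.2
      have : aᶜ ⊓ bᶜ ∈ V := hV.2.2 _ ha' _ hb'
      rw [← compl_sup] at this
      exact hnot _ hab this
    · rintro (ha | hb)
      · exact hV.2.1 a ha _ le_sup_left
      · exact hV.2.1 b hb _ le_sup_right
  have hinf : ∀ a b : A, a ⊓ b ∈ V ↔ a ∈ V ∧ b ∈ V := fun a b =>
    ⟨fun h => ⟨hV.2.1 _ h a inf_le_left, hV.2.1 _ h b inf_le_right⟩,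
     fun ⟨ha, hb⟩ => hV.2.2 a ha b hb⟩
  refine ⟨fun a => if a ∈ V then true else false, ?_, ?_, ?_, ?_⟩
  · simp [hV.top_mem hne]
  · simp [hV.1]
  · intro a b
    by_cases ha : a ∈ V <;> by_cases hb : b ∈ V <;>
      simp [ha, hb, hsup a b]
  · intro a b
    by_cases ha : a ∈ V <;> by_cases hb : b ∈ V <;>
      simp [ha, hb, hinf a b]

lemma toStone_apply (V : Set A) (hV : IsFilt V) (hu : ∀ a, a ∈ V ∨ aᶜ ∈ V)
    (hne : V.Nonempty) (a : A) :
    (toStone V hV hu hne).1 a = true ↔ a ∈ V := by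
  classical
  show (if a ∈ V then true else false) = true ↔ a ∈ V
  by_cases ha : a ∈ V <;> simp [ha]

section boolGen

lemma boolGen_closed {S : Set A} :
    S ⊆ boolGen S ∧ (⊥ : A) ∈ boolGen S ∧ (⊤ : A) ∈ boolGen S ∧
    (∀ x ∈ boolGen S, xᶜ ∈ boolGen S) ∧
    (∀ x ∈ boolGen S, ∀ y ∈ boolGen S, x ⊔ y ∈ boolGen S) ∧
    (∀ x ∈ boolGen S, ∀ y ∈ boolGen S, x ⊓ y ∈ boolGen S) := by
  refine ⟨fun s hs => fun t ht => ht.1 hs,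
    fun t ht => ht.2.1, fun t ht => ht.2.2.1,
    fun x hx t ht => ht.2.2.2.1 x (hx t ht),
    fun x hx y hy t ht => ht.2.2.2.2.1 x (hx t ht) y (hy t ht),
    fun x hx y hy t ht => ht.2.2.2.2.2 x (hx t ht) y (hy t ht)⟩

end boolGen

/-- The key separation lemma. -/
lemma exists_sep {S : Set A} {r : A} (hr : r ∉ boolGen S) :
    ∃ u v : StoneSpace A, (∀ s ∈ S, u.1 s = v.1 s) ∧ u.1 r = true ∧ v.1 r = false := by
  obtain ⟨hSB, hbB, htB, hcB, hsB, hiB⟩ := boolGen_closed (S := S)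
  set B := boolGen S with hB
  -- P₀: "complements of b₁ ⊔ b₂ with b₁ ≤ r, b₂ ≤ rᶜ in B"
  set P₀ : A → Prop := fun x => ∃ b₁ b₂, b₁ ∈ B ∧ b₁ ≤ r ∧ b₂ ∈ B ∧ b₂ ≤ rᶜ ∧ x = (b₁ ⊔ b₂)ᶜ
    with hP₀
  have hP₀top : P₀ ⊤ := ⟨⊥, ⊥, hbB, bot_le, hbB, bot_le, by simp⟩
  have hP₀meet : ∀ x y, P₀ x → P₀ y → P₀ (x ⊓ y) := by
    rintro x y ⟨b₁, b₂, h1, h2, h3, h4, rfl⟩ ⟨c₁, c₂, h5, h6, h7, h8, rfl⟩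
    refine ⟨b₁ ⊔ c₁, b₂ ⊔ c₂, hsB _ h1 _ h5, sup_le h2 h6, hsB _ h3 _ h7, sup_le h4 h8, ?_⟩
    rw [← compl_sup]
    congr 1
    rw [sup_sup_sup_comm]
  have hP₀bot : ∀ x, P₀ x → ¬ x ⊓ (⊤ : A) ≤ ⊥ := by
    rintro x ⟨b₁, b₂, h1, h2, h3, h4, rfl⟩ hle
    rw [inf_top_eq, le_bot_iff, compl_eq_bot] at hle
    apply hr
    have h5 : b₂ᶜ ≤ b₁ :=
      calc b₂ᶜ = b₂ᶜ ⊓ (b₁ ⊔ b₂) := by rw [hle, inf_top_eq]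
        _ = (b₂ᶜ ⊓ b₁) ⊔ (b₂ᶜ ⊓ b₂) := inf_sup_left _ _ _
        _ = b₂ᶜ ⊓ b₁ := by simp
        _ ≤ b₁ := inf_le_right
    have h6 : r = b₂ᶜ := le_antisymm (le_compl_comm.mp h4) (h5.trans h2)
    rw [h6]
    exact hcB _ h3
  -- the base ultrafilter U
  obtain ⟨U, hF₀U, hU, hUu⟩ := exists_ultra (IsFilt.gen ⟨⊤, hP₀top⟩ hP₀meet hP₀bot)
    ⟨⊤, ⟨⊤, hP₀top, le_top⟩⟩
  have hUne : U.Nonempty := ⟨⊤, hF₀U ⟨⊤, hP₀top, le_top⟩⟩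
  have hUcompl : ∀ b, b ∈ B → b ≤ r ⊔ rᶜ → True := fun _ _ _ => trivial
  -- elements of B below r or below rᶜ are NOT in U
  have hnotler : ∀ b ∈ B, b ≤ r → b ∉ U := by
    intro b hb hbr hbU
    have : bᶜ ∈ U := hF₀U ⟨bᶜ, ⟨b, ⊥, hb, hbr, hbB, bot_le, by simp⟩, by simp⟩
    exact hU.1 (by simpa using hU.2.2 b hbU bᶜ this)
  have hnotlerc : ∀ b ∈ B, b ≤ rᶜ → b ∉ U := by
    intro b hb hbr hbU
    have : bᶜ ∈ U := hF₀U ⟨bᶜ, ⟨⊥, b, hbB, bot_le, hb, hbr, by simp⟩, by simp⟩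
    exact hU.1 (by simpa using hU.2.2 b hbU bᶜ this)
  -- the two extensions
  set P : A → Prop := fun b => b ∈ B ∧ b ∈ U with hP
  have hPtop : P ⊤ := ⟨htB, hU.top_mem hUne⟩
  have hPmeet : ∀ x y, P x → P y → P (x ⊓ y) :=
    fun x y hx hy => ⟨hiB x hx.1 y hy.1, hU.2.2 x hx.2 y hy.2⟩
  have hPbot1 : ∀ x, P x → ¬ x ⊓ r ≤ ⊥ := by
    intro x hx hle
    refine hnotlerc x hx.1 ?_ hx.2
    rw [le_compl_iff_disjoint_right, disjoint_iff]
    exact le_bot_iff.mp hle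
  have hPbot2 : ∀ x, P x → ¬ x ⊓ rᶜ ≤ ⊥ := by
    intro x hx hle
    refine hnotler x hx.1 ?_ hx.2
    have := le_bot_iff.mp hle
    rwa [← _root_.sdiff_eq, sdiff_eq_bot_iff] at this
  obtain ⟨U₁, hFU₁, hU₁, hU₁u⟩ := exists_ultra (IsFilt.gen (r := r) ⟨⊤, hPtop⟩ hPmeet hPbot1)
    ⟨⊤, ⟨⊤, hPtop, le_top⟩⟩
  obtain ⟨U₂, hFU₂, hU₂, hU₂u⟩ := exists_ultra (IsFilt.gen (r := rᶜ) ⟨⊤, hPtop⟩ hPmeet hPbot2)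
    ⟨⊤, ⟨⊤, hPtop, le_top⟩⟩
  have hU₁ne : U₁.Nonempty := ⟨⊤, hFU₁ ⟨⊤, hPtop, le_top⟩⟩
  have hU₂ne : U₂.Nonempty := ⟨⊤, hFU₂ ⟨⊤, hPtop, le_top⟩⟩
  -- agreement on B
  have hagree : ∀ b ∈ B, (b ∈ U₁ ↔ b ∈ U₂) := by
    intro b hb
    by_cases hbU : b ∈ U
    · simp only [iff_true_intro (hFU₁ ⟨b, ⟨hb, hbU⟩, inf_le_left⟩),
        iff_true_intro (hFU₂ ⟨b, ⟨hb, hbU⟩, inf_le_left⟩)]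
    · have hbc : bᶜ ∈ U := (hUu b).resolve_left hbU
      have h1 : bᶜ ∈ U₁ := hFU₁ ⟨bᶜ, ⟨hcB b hb, hbc⟩, inf_le_left⟩
      have h2 : bᶜ ∈ U₂ := hFU₂ ⟨bᶜ, ⟨hcB b hb, hbc⟩, inf_le_left⟩
      have hn1 : b ∉ U₁ := fun hbU₁ => hU₁.1 (by simpa using hU₁.2.2 b hbU₁ bᶜ h1)
      have hn2 : b ∉ U₂ := fun hbU₂ => hU₂.1 (by simpa using hU₂.2.2 b hbU₂ bᶜ h2)
      simp [hn1, hn2]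
  have hrU₁ : r ∈ U₁ := hFU₁ ⟨⊤, hPtop, inf_le_right⟩
  have hrU₂ : r ∉ U₂ := by
    intro hrU₂
    have : rᶜ ∈ U₂ := hFU₂ ⟨⊤, hPtop, inf_le_right⟩
    exact hU₂.1 (by simpa using hU₂.2.2 r hrU₂ rᶜ this)
  refine ⟨toStone U₁ hU₁ hU₁u hU₁ne, toStone U₂ hU₂ hU₂u hU₂ne, fun s hs => ?_, ?_, ?_⟩
  · have hsB' : s ∈ B := hSB hs
    rw [Bool.eq_iff_iff, toStone_apply, toStone_apply]
    exact hagree s hsB'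
  · exact (toStone_apply _ _ _ _ r).mpr hrU₁
  · rw [Bool.eq_false_iff]
    exact fun h => hrU₂ ((toStone_apply _ _ _ _ r).mp h)


/-- A Stone point containing a given nonzero element. -/
lemma exists_point {a : A} (ha : a ≠ ⊥) : ∃ u : StoneSpace A, u.1 a = true := by
  have hfilt : IsFilt {y : A | ∃ x, x = a ∧ x ⊓ (⊤ : A) ≤ y} :=
    IsFilt.gen ⟨a, rfl⟩ (by rintro x y rfl rfl; simp)
      (by rintro x rfl h; exact ha (le_bot_iff.mp (by simpa using h)))
  obtain ⟨V, hsub, hV, hVu⟩ := exists_ultra hfilt ⟨a, ⟨a, rfl, by simp⟩⟩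
  have hVne : V.Nonempty := ⟨a, hsub ⟨a, rfl, by simp⟩⟩
  exact ⟨toStone V hV hVu hVne, (toStone_apply _ _ _ _ a).mpr (hsub ⟨a, rfl, by simp⟩)⟩

/-- The characteristic function of the clopen set `[r]`. -/
def chi (r : A) : C(StoneSpace A, ℝ) :=
  ⟨fun g => if g.1 r = true then 1 else 0, by
    have h1 : Continuous fun g : StoneSpace A => g.1 r :=
      (continuous_apply r).comp continuous_subtype_val
    exact (continuous_of_discreteTopology
      (f := fun b : Bool => if b = true then (1 : ℝ) else 0)).comp h1⟩

lemma chi_apply (r : A) (g : StoneSpace A) : chi r g = if g.1 r = true then 1 else 0 := rfl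

lemma chi_injective : Function.Injective (chi (A := A)) := by
  intro r s hrs
  by_contra hne
  have key : ∀ p q : A, ¬ p ≤ q → chi p = chi q → False := by
    intro p q hpq hchi
    have hne' : p \ q ≠ ⊥ := fun h => hpq (sdiff_eq_bot_iff.mp h)
    obtain ⟨u, hu⟩ := exists_point hne'
    have hp : u.1 p = true := by
      have h := u.2.2.2.1 (p \ q) p
      rw [sup_eq_right.mpr sdiff_le, hu] at h
      simpa using h
    have hq : u.1 q = false := by
      have h := u.2.2.2.2 (p \ q) q
      have hbq : (p \ q) ⊓ q = ⊥ := by simp [sdiff_eq, inf_assoc]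
      rw [hbq, u.2.2.1, hu] at h
      simpa using h.symm
    have := DFunLike.congr_fun hchi u
    rw [chi_apply, chi_apply, hp, hq] at this
    simpa using this
  rcases (not_and_or.mp fun hc => hne (le_antisymm hc.1 hc.2)) with h | h
  · exact key r s h hrs
  · exact key s r h hrs.symm

/-- the equalizer subalgebra of two evaluation points -/
def eqAlg {K : Type u} [TopologicalSpace K] (u v : K) : Subalgebra ℝ C(K, ℝ) where
  carrier := {h | h u = h v}
  mul_mem' := by intro a b ha hb; simp only [Set.mem_setOf_eq, ContinuousMap.mul_apply] at *
                 rw [ha, hb]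
  add_mem' := by intro a b ha hb; simp only [Set.mem_setOf_eq, ContinuousMap.add_apply] at *
                 rw [ha, hb]
  algebraMap_mem' := by intro c; simp [Set.mem_setOf_eq]

lemma isClosed_eqAlg {K : Type u} [TopologicalSpace K] (u v : K) :
    IsClosed ((eqAlg u v : Subalgebra ℝ C(K, ℝ)) : Set C(K, ℝ)) :=
  isClosed_eq (continuous_eval_const u) (continuous_eval_const v)

lemma part1 : irrBool A ≤ irrBaA (StoneSpace A) := by
  rw [irrBool, irrBaA]
  apply csSup_le
  · exact ⟨0, ∅, by simp, by simp⟩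
  rintro c ⟨R, hR, rfl⟩
  apply le_csSup ⟨#C(StoneSpace A, ℝ), ?_⟩ ?_
  · rintro c ⟨F, -, rfl⟩
    exact Cardinal.mk_set_le F
  · refine ⟨chi '' R, ?_, (Cardinal.mk_image_eq chi_injective).symm⟩
    rintro f ⟨r, hrR, rfl⟩
    rw [show chi '' R \ {chi r} = chi '' (R \ {r}) by
      rw [Set.image_diff chi_injective, Set.image_singleton]]
    intro hmem
    obtain ⟨u, v, hagree, hu, hv⟩ := exists_sep (hR r hrR)
    have hsub : (Algebra.adjoin ℝ (chi '' (R \ {r})) : Subalgebra ℝ C(StoneSpace A, ℝ))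
        ≤ eqAlg u v := by
      apply Algebra.adjoin_le
      rintro f ⟨s, hs, rfl⟩
      show chi s u = chi s v
      rw [chi_apply, chi_apply, hagree s hs]
    have hcl := closure_minimal (fun x hx => hsub hx) (isClosed_eqAlg u v)
    have : chi r u = chi r v := hcl hmem
    rw [chi_apply, chi_apply, hu, hv] at this
    simpa using this

lemma part2 (K : Type u) [TopologicalSpace K] : irrBaA K ≤ irrBaS C(K, ℝ) := by
  rw [irrBaA, irrBaS]
  apply csSup_le
  · exact ⟨0, ∅, by simp, by simp⟩
  rintro c ⟨F, hF, rfl⟩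
  apply le_csSup ⟨#C(K, ℝ), ?_⟩ ?_
  · rintro c ⟨F', -, rfl⟩
    exact Cardinal.mk_set_le F'
  · refine ⟨F, fun f hf hmem => hF f hf ?_, rfl⟩
    refine closure_mono ?_ hmem
    intro x hx
    exact Algebra.span_le_adjoin ℝ _ hx

end BA14

/-- For a Boolean algebra `A` with Stone space `K_A` and any compact Hausdorff
space `K`: `irr(A) ≤ irr_{BaA}(C(K_A)) ≤ irr_{BaS}(C(K_A))` and
`irr_{BaA}(C(K)) ≤ irr_{BaS}(C(K))`. -/
theorem stmt14 (A : Type u) [BooleanAlgebra A]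
    (K : Type u) [TopologicalSpace K] [CompactSpace K] [T2Space K] :
    irrBool A ≤ irrBaA (StoneSpace A) ∧
      irrBaA (StoneSpace A) ≤ irrBaS C(StoneSpace A, ℝ) ∧
      irrBaA K ≤ irrBaS C(K, ℝ) :=
  ⟨BA14.part1, BA14.part2 _, BA14.part2 _⟩

end
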